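/- For k ≥ 2, the Cartesian product graph G = C_{3k} □ P₂ satisfies SIC(G) = (2/3)·|V(G)| = 4k; that is, the minimum cardinality of a self-identifying code of C_{3k} □ P₂ equals 4k. -/

import Mathlib

open SimpleGraph
open scoped Fin.NatCast Fin.CommRing

def closedNbhd {V : Type*} (G : SimpleGraph V) (v : V) : Set V :=
  insert v (G.neighborSet v)

def IsSIC {V : Type*} (G : SimpleGraph V) (S : Set V) : Prop :=
  (∀ x : V, (closedNbhd G x ∩ S).Nonempty) ∧
    ∀ u v : V, u ≠ v →
      ((closedNbhd G u ∩ S) \ (closedNbhd G v ∩ S)).Nonempty ∧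
      ((closedNbhd G v ∩ S) \ (closedNbhd G u ∩ S)).Nonempty

abbrev GG (n : ℕ) : SimpleGraph (Fin n × Fin 2) := SimpleGraph.cycleGraph n □ SimpleGraph.pathGraph 2

section
variable {n : ℕ} [NeZero n] (hn : 6 ≤ n)

include hn in
lemma val_one' : (1 : Fin n).val = 1 := by
  have : (1 : Fin n).val = 1 % n := rfl
  rw [this, Nat.mod_eq_of_lt (by omega)]

include hn in
lemma val_add_one (i : Fin n) : (i + 1).val = if i.val + 1 = n then 0 else i.val + 1 := by
  have h := Fin.add_def i 1
  have h2 := congrArg Fin.val h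
  simp only [val_one' hn] at h2
  rw [h2]
  have := i.isLt
  split <;> rename_i hc
  · rw [hc, Nat.mod_self]
  · exact Nat.mod_eq_of_lt (by omega)

include hn in
lemma val_sub_one (i : Fin n) : (i - 1).val = if i.val = 0 then n - 1 else i.val - 1 := by
  have h := Fin.sub_def i 1
  have h2 := congrArg Fin.val h
  simp only [val_one' hn] at h2
  rw [h2]
  have := i.isLt
  split <;> rename_i hc
  · rw [hc]; exact Nat.mod_eq_of_lt (by omega)
  · rw [show n - 1 + i.val = n + (i.val - 1) by omega, Nat.add_mod_left]
    exact Nat.mod_eq_of_lt (by omega)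

include hn in
lemma natconst_ne {c : ℕ} (h1 : 0 < c) (h2 : c < n) : ((c : ℕ) : Fin n) ≠ 0 := by
  intro h
  have := congrArg Fin.val h
  rw [Fin.val_natCast, Nat.mod_eq_of_lt h2] at this
  simp at this; omega

include hn in
lemma cyc_adj {u v : Fin n} : (cycleGraph n).Adj u v ↔ v = u + 1 ∨ v = u - 1 := by
  rw [cycleGraph_adj']
  constructor
  · rintro (h | h)
    · right
      have : u - v = 1 := Fin.ext (by rw [val_one' hn]; exact h)
      rw [eq_sub_iff_add_eq, ← this]; ring
    · left
      have : v - u = 1 := Fin.ext (by rw [val_one' hn]; exact h)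
      rw [← this]; ring
  · rintro (rfl | rfl)
    · right; rw [show u + 1 - u = 1 by ring, val_one' hn]
    · left; rw [show u - (u - 1) = 1 by ring, val_one' hn]

lemma path2_adj {a b : Fin 2} : (pathGraph 2).Adj a b ↔ b = a + 1 := by
  rw [pathGraph_adj]
  revert a b; decide

include hn in
lemma mem_nbhd {x y : Fin n × Fin 2} :
    y ∈ closedNbhd (GG n) x ↔
      y = x ∨ y = (x.1 + 1, x.2) ∨ y = (x.1 - 1, x.2) ∨ y = (x.1, x.2 + 1) := by
  show y = x ∨ (GG n).Adj x y ↔ _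
  rw [boxProd_adj, cyc_adj hn, path2_adj]
  constructor
  · rintro (rfl | ⟨(h | h), he⟩ | ⟨h, he⟩)
    · exact Or.inl rfl
    · exact Or.inr (Or.inl (Prod.ext h he.symm))
    · exact Or.inr (Or.inr (Or.inl (Prod.ext h he.symm)))
    · exact Or.inr (Or.inr (Or.inr (Prod.ext he.symm h)))
  · rintro (rfl | rfl | rfl | rfl)
    · exact Or.inl rfl
    · exact Or.inr (Or.inl ⟨Or.inl rfl, rfl⟩)
    · exact Or.inr (Or.inl ⟨Or.inr rfl, rfl⟩)
    · exact Or.inr (Or.inr ⟨rfl, rfl⟩)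

lemma nbhd_symm {V : Type*} {G : SimpleGraph V} {x y : V} :
    y ∈ closedNbhd G x ↔ x ∈ closedNbhd G y := by
  show y = x ∨ G.Adj x y ↔ x = y ∨ G.Adj y x
  rw [eq_comm, G.adj_comm]

lemma fin2_succ_succ (j : Fin 2) : j + 1 + 1 = j := by revert j; decide
lemma fin2_succ_ne (j : Fin 2) : j + 1 ≠ j := by revert j; decide
end

section
variable {n : ℕ} [NeZero n] (hn : 6 ≤ n) {S : Set (Fin n × Fin 2)}

include hn in
lemma clauseA (hS : IsSIC (GG n) S) (i : Fin n) (j : Fin 2) :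
    (i - 1, j) ∈ S ∨ (i + 1, j) ∈ S := by
  obtain ⟨s, ⟨hsu, hsS⟩, hns⟩ :=
    (hS.2 (i, j) (i, j + 1) (fun h => fin2_succ_ne j (congrArg Prod.snd h).symm)).1
  have hnotv : s ∉ closedNbhd (GG n) (i, j + 1) := fun h => hns ⟨h, hsS⟩
  rw [mem_nbhd hn] at hsu
  rcases hsu with rfl | rfl | rfl | rfl
  · exact absurd ((mem_nbhd hn).mpr
      (Or.inr (Or.inr (Or.inr (by exact Prod.ext rfl (fin2_succ_succ j).symm))))) hnotv
  · exact Or.inr hsS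
  · exact Or.inl hsS
  · exact absurd ((mem_nbhd hn).mpr (Or.inl rfl)) hnotv

include hn in
lemma clauseB (hS : IsSIC (GG n) S) (i : Fin n) (j : Fin 2) :
    (i, j) ∈ S ∨ (i + 1, j) ∈ S := by
  obtain ⟨s, ⟨hsu, hsS⟩, hns⟩ :=
    (hS.2 (i, j) (i - 1, j + 1) (fun h => fin2_succ_ne j (congrArg Prod.snd h).symm)).1
  have hnotv : s ∉ closedNbhd (GG n) (i - 1, j + 1) := fun h => hns ⟨h, hsS⟩
  rw [mem_nbhd hn] at hsu
  rcases hsu with rfl | rfl | rfl | rfl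
  · exact Or.inl hsS
  · exact Or.inr hsS
  · exact absurd ((mem_nbhd hn).mpr
      (Or.inr (Or.inr (Or.inr (by exact Prod.ext rfl (fin2_succ_succ j).symm))))) hnotv
  · exact absurd ((mem_nbhd hn).mpr
      (Or.inr (Or.inl (by exact Prod.ext (by ring) rfl)))) hnotv
end

section
variable {n : ℕ} [NeZero n] {S : Set (Fin n × Fin 2)}

lemma block_card (hn : 6 ≤ n) (hS : IsSIC (GG n) S) (t : ℕ) (ht : 3 * t + 2 < n) :
    4 ≤ ((S.toFinite.toFinset).filter (fun v => v.1.val / 3 = t)).card := by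
  set c0 : Fin n := ⟨3 * t, by omega⟩ with hc0
  set c1 : Fin n := ⟨3 * t + 1, by omega⟩ with hc1
  set c2 : Fin n := ⟨3 * t + 2, by omega⟩ with hc2
  have hc01 : c0 + 1 = c1 := by
    apply Fin.ext; rw [val_add_one hn]
    show (if 3 * t + 1 = n then 0 else 3 * t + 1) = 3 * t + 1
    rw [if_neg (by omega)]
  have hc12 : c1 + 1 = c2 := by
    apply Fin.ext; rw [val_add_one hn]
    show (if 3 * t + 1 + 1 = n then 0 else 3 * t + 1 + 1) = 3 * t + 2
    rw [if_neg (by omega)]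
  have hc1m : c1 - 1 = c0 := by
    apply Fin.ext; rw [val_sub_one hn]
    show (if 3 * t + 1 = 0 then n - 1 else 3 * t + 1 - 1) = 3 * t
    rw [if_neg (by omega)]
    omega
  have key : ∀ j : Fin 2, ∃ d e : Fin n, d ≠ e ∧ (d, j) ∈ S ∧ (e, j) ∈ S ∧
      d.val / 3 = t ∧ e.val / 3 = t := by
    intro j
    have hA := clauseA hn hS c1 j
    rw [hc1m, hc12] at hA
    have hB0 := clauseB hn hS c0 j
    rw [hc01] at hB0
    have hB1 := clauseB hn hS c1 j
    rw [hc12] at hB1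
    have h01 : c0 ≠ c1 := Fin.ne_of_val_ne (by show 3*t ≠ 3*t+1; omega)
    have h02 : c0 ≠ c2 := Fin.ne_of_val_ne (by show 3*t ≠ 3*t+2; omega)
    have h12 : c1 ≠ c2 := Fin.ne_of_val_ne (by show 3*t+1 ≠ 3*t+2; omega)
    have v0 : c0.val / 3 = t := by show 3 * t / 3 = t; omega
    have v1 : c1.val / 3 = t := by show (3 * t + 1) / 3 = t; omega
    have v2 : c2.val / 3 = t := by show (3 * t + 2) / 3 = t; omega
    rcases hA with h | h
    · rcases hB1 with h' | h'
      · exact ⟨c0, c1, h01, h, h', v0, v1⟩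
      · exact ⟨c0, c2, h02, h, h', v0, v2⟩
    · rcases hB0 with h' | h'
      · exact ⟨c0, c2, h02, h', h, v0, v2⟩
      · exact ⟨c1, c2, h12, h', h, v1, v2⟩
  obtain ⟨d0, e0, hde0, hd0, he0, hvd0, hve0⟩ := key 0
  obtain ⟨d1, e1, hde1, hd1, he1, hvd1, hve1⟩ := key 1
  have h01' : (0 : Fin 2) ≠ 1 := by decide
  have hsub : ({(d0, (0 : Fin 2)), (e0, 0), (d1, 1), (e1, 1)} : Finset (Fin n × Fin 2)) ⊆
      (S.toFinite.toFinset).filter (fun v => v.1.val / 3 = t) := by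
    intro x hx
    simp only [Finset.mem_insert, Finset.mem_singleton] at hx
    rcases hx with rfl | rfl | rfl | rfl <;>
      simp_all [Finset.mem_filter, Set.Finite.mem_toFinset]
  have hm1 : (d0, (0 : Fin 2)) ∉ ({(e0, 0), (d1, 1), (e1, 1)} : Finset (Fin n × Fin 2)) := by
    simp [Prod.ext_iff, hde0, h01']
  have hm2 : (e0, (0 : Fin 2)) ∉ ({(d1, 1), (e1, 1)} : Finset (Fin n × Fin 2)) := by
    simp [Prod.ext_iff, h01']
  have hm3 : (d1, (1 : Fin 2)) ∉ ({(e1, 1)} : Finset (Fin n × Fin 2)) := by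
    simp [Prod.ext_iff, hde1]
  have hq : ({(d0, (0 : Fin 2)), (e0, 0), (d1, 1), (e1, 1)} : Finset (Fin n × Fin 2)).card = 4 := by
    rw [Finset.card_insert_of_notMem hm1, Finset.card_insert_of_notMem hm2,
      Finset.card_insert_of_notMem hm3, Finset.card_singleton]
  rw [← hq]
  exact Finset.card_le_card hsub

lemma lower_bound (hn : 6 ≤ n) (hn3 : n % 3 = 0) (hS : IsSIC (GG n) S) :
    4 * (n / 3) ≤ S.ncard := by
  rw [Set.ncard_eq_toFinset_card S S.toFinite]
  have hcard := Finset.card_eq_sum_card_fiberwise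
    (f := fun v : Fin n × Fin 2 => v.1.val / 3) (s := S.toFinite.toFinset)
    (t := Finset.range (n / 3))
    (fun x _ => Finset.mem_range.mpr (show x.1.val / 3 < n / 3 by
      have := x.1.isLt; omega))
  rw [hcard]
  calc 4 * (n / 3) = ∑ _t ∈ Finset.range (n / 3), 4 := by
        rw [Finset.sum_const, Finset.card_range]; ring
    _ ≤ _ := Finset.sum_le_sum fun t ht => block_card hn hS t
        (by have := Finset.mem_range.mp ht; omega)
end

def S0 (n : ℕ) : Set (Fin n × Fin 2) := {v | v.1.val % 3 ≠ 2}

section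
variable {n : ℕ} [NeZero n] (hn : 6 ≤ n)

include hn in
lemma fin_shift {c : ℕ} (h0 : 0 < c) (h2 : c < n) (h : ((c : ℕ) : Fin n) = 0) : False :=
  natconst_ne hn h0 h2 h

include hn in
lemma sep (hn3 : n % 3 = 0) (u v : Fin n × Fin 2) (hne : v ≠ u) :
    ∃ s, s ∈ closedNbhd (GG n) u ∧ s ∈ S0 n ∧ v ∉ closedNbhd (GG n) s := by
  by_contra hc
  push_neg at hc
  apply hne
  obtain ⟨i, j⟩ := u
  have f20 : ∀ j : Fin 2, j + 1 ≠ j := by decide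
  have f21 : ∀ j : Fin 2, j + 1 + 1 = j := by decide
  obtain h0 | h1 | h2 : i.val % 3 = 0 ∨ i.val % 3 = 1 ∨ i.val % 3 = 2 := by omega
  · -- candidates (i,j), (i+1,j), (i,j+1)
    have m1 := hc (i, j) ((mem_nbhd hn).mpr (Or.inl rfl))
      (by simp only [S0, Set.mem_setOf_eq]; omega)
    have m2 := hc (i + 1, j) ((mem_nbhd hn).mpr (Or.inr (Or.inl rfl)))
      (by simp only [S0, Set.mem_setOf_eq]; rw [val_add_one hn]; split <;> omega)
    have m3 := hc (i, j + 1) ((mem_nbhd hn).mpr (Or.inr (Or.inr (Or.inr rfl))))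
      (by simp only [S0, Set.mem_setOf_eq]; omega)
    rw [mem_nbhd hn] at m1 m2 m3
    simp only [Prod.ext_iff] at m1 m2 m3
    rcases m1 with ⟨h1', h2'⟩ | ⟨h1', h2'⟩ | ⟨h1', h2'⟩ | ⟨h1', h2'⟩
    · exact Prod.ext h1' h2'
    · -- v = (i+1, j); use m3 : v ∈ N[(i,j+1)]
      exfalso
      rcases m3 with ⟨g1, g2⟩ | ⟨g1, g2⟩ | ⟨g1, g2⟩ | ⟨g1, g2⟩
      · exact f20 j (g2.symm.trans h2')
      · exact f20 j (g2.symm.trans h2')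
      · exact f20 j (g2.symm.trans h2')
      · -- fst: i + 1 = i
        have h := (h1'.symm.trans g1)
        exact fin_shift hn (c := 1) (by norm_num) (by omega)
          (by push_cast; first | linear_combination h | linear_combination -h)
    · -- v = (i-1, j); use m2 : v ∈ N[(i+1,j)]
      exfalso
      rcases m2 with ⟨g1, g2⟩ | ⟨g1, g2⟩ | ⟨g1, g2⟩ | ⟨g1, g2⟩
      · exact fin_shift hn (c := 2) (by norm_num) (by omega)
          (by push_cast; first | linear_combination (h1'.symm.trans g1) | linear_combination -(h1'.symm.trans g1))
      · exact fin_shift hn (c := 3) (by norm_num) (by omega)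
          (by push_cast; first | linear_combination (h1'.symm.trans g1) | linear_combination -(h1'.symm.trans g1))
      · exact fin_shift hn (c := 1) (by norm_num) (by omega)
          (by push_cast; first | linear_combination (h1'.symm.trans g1) | linear_combination -(h1'.symm.trans g1))
      · exact f20 j (g2.symm.trans h2')
    · -- v = (i, j+1); use m2 : v ∈ N[(i+1,j)]
      exfalso
      rcases m2 with ⟨g1, g2⟩ | ⟨g1, g2⟩ | ⟨g1, g2⟩ | ⟨g1, g2⟩
      · exact f20 j (h2'.symm.trans g2)
      · exact f20 j (h2'.symm.trans g2)
      · exact f20 j (h2'.symm.trans g2)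
      · exact fin_shift hn (c := 1) (by norm_num) (by omega)
          (by push_cast; first | linear_combination (g1.symm.trans h1') | linear_combination -(g1.symm.trans h1'))
  · -- candidates (i,j), (i-1,j), (i,j+1)
    have m1 := hc (i, j) ((mem_nbhd hn).mpr (Or.inl rfl))
      (by simp only [S0, Set.mem_setOf_eq]; omega)
    have m2 := hc (i - 1, j) ((mem_nbhd hn).mpr (Or.inr (Or.inr (Or.inl rfl))))
      (by simp only [S0, Set.mem_setOf_eq]; rw [val_sub_one hn]; split <;> omega)
    have m3 := hc (i, j + 1) ((mem_nbhd hn).mpr (Or.inr (Or.inr (Or.inr rfl))))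
      (by simp only [S0, Set.mem_setOf_eq]; omega)
    rw [mem_nbhd hn] at m1 m2 m3
    simp only [Prod.ext_iff] at m1 m2 m3
    rcases m1 with ⟨h1', h2'⟩ | ⟨h1', h2'⟩ | ⟨h1', h2'⟩ | ⟨h1', h2'⟩
    · exact Prod.ext h1' h2'
    · -- v = (i+1, j); use m2 : v ∈ N[(i-1,j)] = {(i-1,j),(i-1+1,j),(i-1-1,j),(i-1,j+1)}
      exfalso
      rcases m2 with ⟨g1, g2⟩ | ⟨g1, g2⟩ | ⟨g1, g2⟩ | ⟨g1, g2⟩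
      · exact fin_shift hn (c := 2) (by norm_num) (by omega)
          (by push_cast; first | linear_combination (g1.symm.trans h1') | linear_combination -(g1.symm.trans h1'))
      · exact fin_shift hn (c := 1) (by norm_num) (by omega)
          (by push_cast; first | linear_combination (g1.symm.trans h1') | linear_combination -(g1.symm.trans h1'))
      · exact fin_shift hn (c := 3) (by norm_num) (by omega)
          (by push_cast; first | linear_combination (g1.symm.trans h1') | linear_combination -(g1.symm.trans h1'))
      · exact f20 j (g2.symm.trans h2')
    · -- v = (i-1, j); use m3 : v ∈ N[(i,j+1)]
      exfalso
      rcases m3 with ⟨g1, g2⟩ | ⟨g1, g2⟩ | ⟨g1, g2⟩ | ⟨g1, g2⟩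
      · exact f20 j (g2.symm.trans h2')
      · exact f20 j (g2.symm.trans h2')
      · exact f20 j (g2.symm.trans h2')
      · exact fin_shift hn (c := 1) (by norm_num) (by omega)
          (by push_cast; first | linear_combination (h1'.symm.trans g1) | linear_combination -(h1'.symm.trans g1))
    · -- v = (i, j+1); use m2 : v ∈ N[(i-1,j)]
      exfalso
      rcases m2 with ⟨g1, g2⟩ | ⟨g1, g2⟩ | ⟨g1, g2⟩ | ⟨g1, g2⟩
      · exact f20 j (h2'.symm.trans g2)
      · exact f20 j (h2'.symm.trans g2)
      · exact f20 j (h2'.symm.trans g2)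
      · exact fin_shift hn (c := 1) (by norm_num) (by omega)
          (by push_cast; first | linear_combination (g1.symm.trans h1') | linear_combination -(g1.symm.trans h1'))
  · -- candidates (i-1,j), (i+1,j)
    have m1 := hc (i - 1, j) ((mem_nbhd hn).mpr (Or.inr (Or.inr (Or.inl rfl))))
      (by simp only [S0, Set.mem_setOf_eq]; rw [val_sub_one hn]; split <;> omega)
    have m2 := hc (i + 1, j) ((mem_nbhd hn).mpr (Or.inr (Or.inl rfl)))
      (by simp only [S0, Set.mem_setOf_eq]; rw [val_add_one hn]; split <;> omega)
    rw [mem_nbhd hn] at m1 m2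
    simp only [Prod.ext_iff] at m1 m2
    rcases m1 with ⟨h1', h2'⟩ | ⟨h1', h2'⟩ | ⟨h1', h2'⟩ | ⟨h1', h2'⟩
    · -- v = (i-1, j); m2 elements (i+1,j),(i+1+1,j),(i+1-1,j),(i+1,j+1)
      exfalso
      rcases m2 with ⟨g1, g2⟩ | ⟨g1, g2⟩ | ⟨g1, g2⟩ | ⟨g1, g2⟩
      · exact fin_shift hn (c := 2) (by norm_num) (by omega)
          (by push_cast; first | linear_combination (g1.symm.trans h1') | linear_combination -(g1.symm.trans h1'))
      · exact fin_shift hn (c := 3) (by norm_num) (by omega)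
          (by push_cast; first | linear_combination (g1.symm.trans h1') | linear_combination -(g1.symm.trans h1'))
      · exact fin_shift hn (c := 1) (by norm_num) (by omega)
          (by push_cast; first | linear_combination (g1.symm.trans h1') | linear_combination -(g1.symm.trans h1'))
      · exact f20 j (g2.symm.trans h2')
    · -- v = (i-1+1, j) = (i, j) = u
      refine Prod.ext ?_ h2'
      rw [h1']; ring
    · -- v = (i-1-1, j); use m2
      exfalso
      rcases m2 with ⟨g1, g2⟩ | ⟨g1, g2⟩ | ⟨g1, g2⟩ | ⟨g1, g2⟩
      · exact fin_shift hn (c := 3) (by norm_num) (by omega)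
          (by push_cast; first | linear_combination (g1.symm.trans h1') | linear_combination -(g1.symm.trans h1'))
      · exact fin_shift hn (c := 4) (by norm_num) (by omega)
          (by push_cast; first | linear_combination (g1.symm.trans h1') | linear_combination -(g1.symm.trans h1'))
      · exact fin_shift hn (c := 2) (by norm_num) (by omega)
          (by push_cast; first | linear_combination (g1.symm.trans h1') | linear_combination -(g1.symm.trans h1'))
      · exact f20 j (g2.symm.trans h2')
    · -- v = (i-1, j+1); use m2
      exfalso
      rcases m2 with ⟨g1, g2⟩ | ⟨g1, g2⟩ | ⟨g1, g2⟩ | ⟨g1, g2⟩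
      · exact f20 j (h2'.symm.trans g2)
      · exact f20 j (h2'.symm.trans g2)
      · exact f20 j (h2'.symm.trans g2)
      · exact fin_shift hn (c := 2) (by norm_num) (by omega)
          (by push_cast; first | linear_combination (g1.symm.trans h1') | linear_combination -(g1.symm.trans h1'))
end

section
variable {n : ℕ} [NeZero n] (hn : 6 ≤ n)

include hn in
lemma S0_SIC (hn3 : n % 3 = 0) : IsSIC (GG n) (S0 n) := by
  constructor
  · rintro ⟨i, j⟩
    by_cases h : i.val % 3 = 2
    · exact ⟨(i - 1, j), (mem_nbhd hn).mpr (Or.inr (Or.inr (Or.inl rfl))),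
        by simp only [S0, Set.mem_setOf_eq]; rw [val_sub_one hn]; split <;> omega⟩
    · exact ⟨(i, j), (mem_nbhd hn).mpr (Or.inl rfl),
        by simp only [S0, Set.mem_setOf_eq]; omega⟩
  · intro u v huv
    constructor
    · obtain ⟨s, hsu, hsS, hsv⟩ := sep hn hn3 u v (Ne.symm huv)
      exact ⟨s, ⟨hsu, hsS⟩, fun h => hsv (nbhd_symm.mp h.1)⟩
    · obtain ⟨s, hsu, hsS, hsv⟩ := sep hn hn3 v u huv
      exact ⟨s, ⟨hsu, hsS⟩, fun h => hsv (nbhd_symm.mp h.1)⟩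

include hn in
lemma S0_ncard (hn3 : n % 3 = 0) : (S0 n).ncard = 4 * (n / 3) := by
  have e : ((Fin (n / 3) × Fin 2) × Fin 2) ≃ ↥(S0 n) :=
    { toFun := fun p => ⟨(⟨3 * p.1.1.val + p.1.2.val, by
        have h1 := p.1.1.isLt; have h2 := p.1.2.isLt; omega⟩, p.2), by
        simp only [S0, Set.mem_setOf_eq]; omega⟩
      invFun := fun q => ((⟨q.1.1.val / 3, by have := q.1.1.isLt; omega⟩,
        ⟨q.1.1.val % 3, by have := q.2; simp only [S0, Set.mem_setOf_eq] at this; omega⟩),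
        q.1.2)
      left_inv := by
        rintro ⟨⟨a, r⟩, j⟩
        simp only
        congr 1
        · congr 1 <;> apply Fin.ext <;> simp <;> omega
      right_inv := by
        rintro ⟨⟨i, j⟩, h⟩
        apply Subtype.ext
        simp only
        congr 1
        apply Fin.ext
        simp; omega }
  rw [← Nat.card_coe_set_eq, ← Nat.card_congr e]
  simp [Nat.card_eq_fintype_card]
  ring
end

theorem stmt_17 (k : ℕ) (hk : 2 ≤ k) :
    sInf {m : ℕ | ∃ S : Set (Fin (3 * k) × Fin 2),
      IsSIC (SimpleGraph.cycleGraph (3 * k) □ SimpleGraph.pathGraph 2) S ∧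
        S.ncard = m} = 4 * k := by
  haveI : NeZero (3 * k) := ⟨by omega⟩
  have hn : 6 ≤ 3 * k := by omega
  have hn3 : (3 * k) % 3 = 0 := by omega
  have hdiv : 3 * k / 3 = k := by omega
  have hmem : (4 * k) ∈ {m : ℕ | ∃ S : Set (Fin (3 * k) × Fin 2),
      IsSIC (SimpleGraph.cycleGraph (3 * k) □ SimpleGraph.pathGraph 2) S ∧ S.ncard = m} :=
    ⟨S0 (3 * k), S0_SIC hn hn3, by rw [S0_ncard hn hn3, hdiv]⟩
  apply le_antisymm
  · exact Nat.sInf_le hmem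
  · refine le_csInf ⟨4 * k, hmem⟩ ?_
    rintro m ⟨S, hS, rfl⟩
    have := lower_bound hn hn3 hS
    rwa [hdiv] at this
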